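/- For every dimension d ≥ 1, the integral over the positive orthant ℝ₊^d of (∑_{i=1}^d y_i²) · exp(−(∑_{i=1}^d y_i)²) dy equals d²·Γ(d/2) / (2·(d+1)!). -/

import Mathlib

open MeasureTheory Real Set
open scoped ENNReal

lemma lintegral_shift' (f : ℝ → ℝ≥0∞) (x : ℝ) :
    ∫⁻ s in Ici (0:ℝ), f (x + s) = ∫⁻ t in Ici x, f t := by
  rw [← lintegral_indicator measurableSet_Ici, ← lintegral_indicator measurableSet_Ici,
    ← lintegral_add_left_eq_self (fun t => (Ici x).indicator f t) x]
  congr 1; funext s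
  by_cases h : 0 ≤ s
  · simp [Set.indicator_of_mem, h]
  · rw [Set.indicator_of_notMem (by simpa using h), Set.indicator_of_notMem]
    simpa using h

lemma inner_eval {w v : ℝ → ℝ} (hw : Continuous w) (hv : Continuous v)
    (hw0 : ∀ x, 0 ≤ x → 0 ≤ w x) (hv0 : ∀ x, 0 ≤ x → 0 ≤ v x) {t : ℝ} (ht : 0 ≤ t) :
    ∫⁻ x in Icc (0:ℝ) t, ENNReal.ofReal (w x) * ENNReal.ofReal (v (t - x)) =
      ENNReal.ofReal (∫ x in (0:ℝ)..t, w x * v (t - x)) := by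
  rw [← Measure.restrict_congr_set Ioc_ae_eq_Icc, intervalIntegral.integral_of_le ht]
  have e : (∫⁻ x in Ioc (0:ℝ) t, ENNReal.ofReal (w x) * ENNReal.ofReal (v (t - x)))
      = ∫⁻ x in Ioc (0:ℝ) t, ENNReal.ofReal (w x * v (t - x)) := by
    refine setLIntegral_congr_fun measurableSet_Ioc (fun x hx => ?_)
    rw [ENNReal.ofReal_mul (hw0 x hx.1.le)]
  rw [e, ← ofReal_integral_eq_lintegral_ofReal]
  · exact ((hw.mul (hv.comp (continuous_const.sub continuous_id))).continuousOn.integrableOn_compact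
      isCompact_Icc).mono_set Ioc_subset_Icc_self
  · exact (ae_restrict_iff' measurableSet_Ioc).mpr (Filter.Eventually.of_forall fun x hx =>
      mul_nonneg (hw0 x hx.1.le) (hv0 _ (by linarith [hx.2])))

lemma conv_lemma {w v : ℝ → ℝ} (hw : Continuous w) (hv : Continuous v)
    (hw0 : ∀ x, 0 ≤ x → 0 ≤ w x) (hv0 : ∀ x, 0 ≤ x → 0 ≤ v x)
    {h : ℝ → ℝ≥0∞} (hh : Measurable h) :
    (∫⁻ x in Ici (0:ℝ), ENNReal.ofReal (w x) * ∫⁻ s in Ici (0:ℝ), ENNReal.ofReal (v s) * h (x + s)) =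
    ∫⁻ t in Ici (0:ℝ), ENNReal.ofReal (∫ x in (0:ℝ)..t, w x * v (t - x)) * h t := by
  set F : ℝ × ℝ → ℝ≥0∞ := fun p =>
    (ENNReal.ofReal (w p.1) * ENNReal.ofReal (v (p.2 - p.1)) * h p.2) *
      {q : ℝ × ℝ | q.1 ≤ q.2}.indicator 1 p with hF
  have hFmes : Measurable F := by
    refine (((ENNReal.measurable_ofReal.comp (hw.measurable.comp measurable_fst)).mul
      (ENNReal.measurable_ofReal.comp (hv.measurable.comp (measurable_snd.sub measurable_fst)))).mul
      (hh.comp measurable_snd)).mul ?_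
    exact measurable_const.indicator (measurableSet_le measurable_fst measurable_snd)
  have step1 : (∫⁻ x in Ici (0:ℝ), ENNReal.ofReal (w x) *
        ∫⁻ s in Ici (0:ℝ), ENNReal.ofReal (v s) * h (x + s)) =
      ∫⁻ x in Ici (0:ℝ), ∫⁻ t, F (x, t) ∂volume := by
    refine lintegral_congr fun x => ?_
    have e1 : (∫⁻ s in Ici (0:ℝ), ENNReal.ofReal (v s) * h (x + s)) =
        ∫⁻ t in Ici x, ENNReal.ofReal (v (t - x)) * h t := by
      rw [← lintegral_shift' (fun t => ENNReal.ofReal (v (t - x)) * h t) x]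
      simp
    have hm1 : Measurable fun t : ℝ => ENNReal.ofReal (v (t - x)) * h t := by
      have := hv.measurable; fun_prop
    rw [e1, ← lintegral_const_mul _ hm1, ← lintegral_indicator measurableSet_Ici]
    refine lintegral_congr fun t => ?_
    by_cases hxt : x ≤ t
    · simp [hF, Set.indicator_of_mem, hxt, mul_assoc]
    · simp [hF, Set.indicator_of_notMem, hxt]
  rw [step1]
  have step2 : (∫⁻ x in Ici (0:ℝ), ∫⁻ t, F (x, t) ∂volume) =
      ∫⁻ t, ∫⁻ x in Ici (0:ℝ), F (x, t) ∂volume ∂volume :=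
    lintegral_lintegral_swap hFmes.aemeasurable
  rw [step2]
  have step3 : ∀ t : ℝ, (∫⁻ x in Ici (0:ℝ), F (x, t) ∂volume) =
      (∫⁻ x in Icc (0:ℝ) t, ENNReal.ofReal (w x) * ENNReal.ofReal (v (t - x))) * h t := by
    intro t
    have e2 : ∀ x : ℝ, F (x, t) =
        (Iic t).indicator (fun x => (ENNReal.ofReal (w x) * ENNReal.ofReal (v (t - x))) * h t) x := by
      intro x
      by_cases hxt : x ≤ t
      · simp only [hF, Set.indicator_of_mem, hxt, Set.mem_Iic, Set.mem_setOf_eq, Pi.one_apply,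
          mul_one]
      · simp [hF, Set.indicator_of_notMem, hxt]
    simp_rw [e2]
    have hm2 : Measurable fun a : ℝ => ENNReal.ofReal (w a) * ENNReal.ofReal (v (t - a)) := by
      have := hv.measurable; have := hw.measurable; fun_prop
    rw [lintegral_indicator measurableSet_Iic, Measure.restrict_restrict measurableSet_Iic,
      Set.Iic_inter_Ici, lintegral_mul_const _ hm2]
  simp_rw [step3]
  have step4 : ∀ t : ℝ, ((∫⁻ x in Icc (0:ℝ) t, ENNReal.ofReal (w x) * ENNReal.ofReal (v (t - x))) * h t) =
      (Ici (0:ℝ)).indicator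
        (fun t => (∫⁻ x in Icc (0:ℝ) t, ENNReal.ofReal (w x) * ENNReal.ofReal (v (t - x))) * h t) t := by
    intro t
    by_cases ht : 0 ≤ t
    · exact (Set.indicator_of_mem ht
        (fun t => (∫⁻ x in Icc (0:ℝ) t, ENNReal.ofReal (w x) * ENNReal.ofReal (v (t - x))) * h t)).symm
    · rw [Set.indicator_of_notMem (by simpa using ht)]
      have he : Icc (0:ℝ) t = ∅ := Icc_eq_empty (by intro hc; exact ht (le_trans hc le_rfl))
      rw [he, Measure.restrict_empty, lintegral_zero_measure, zero_mul]
  rw [lintegral_congr step4, lintegral_indicator measurableSet_Ici]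
  refine setLIntegral_congr_fun measurableSet_Ici (fun t ht => ?_)
  rw [inner_eval hw hv hw0 hv0 ht]

lemma pi_succ_decomp (n : ℕ) (i : Fin (n+1)) (F : (Fin (n+1) → ℝ) → ℝ≥0∞) (hF : Measurable F) :
    (∫⁻ z, F z ∂(Measure.pi fun _ : Fin (n+1) => (volume.restrict (Ici (0:ℝ)))))
      = ∫⁻ x in Ici (0:ℝ), ∫⁻ y, F (i.insertNth x y)
          ∂(Measure.pi fun _ : Fin n => (volume.restrict (Ici (0:ℝ)))) := by
  have hmp := measurePreserving_piFinSuccAbove (fun _ : Fin (n+1) => (volume.restrict (Ici (0:ℝ)))) i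
  set e := MeasurableEquiv.piFinSuccAbove (fun _ : Fin (n+1) => ℝ) i with he
  have hG : Measurable fun p : ℝ × (Fin n → ℝ) => F (e.symm p) := hF.comp e.symm.measurable
  have h1 := hmp.lintegral_comp (f := fun p => F (e.symm p)) hG
  have h2 : (∫⁻ z, F (e.symm (e z)) ∂(Measure.pi fun _ : Fin (n+1) => (volume.restrict (Ici (0:ℝ)))))
      = ∫⁻ z, F z ∂(Measure.pi fun _ : Fin (n+1) => (volume.restrict (Ici (0:ℝ)))) := by
    refine lintegral_congr fun z => ?_
    rw [e.symm_apply_apply]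
  rw [h2] at h1
  rw [h1, lintegral_prod _ hG.aemeasurable]
  rfl

lemma integral_sub_pow (m : ℕ) (t : ℝ) :
    ∫ x in (0:ℝ)..t, (t - x) ^ m / m.factorial = t ^ (m+1) / (m+1).factorial := by
  rw [intervalIntegral.integral_div]
  have h := intervalIntegral.integral_comp_sub_left (a := 0) (b := t) (fun x => x ^ m) t
  simp only [sub_zero, sub_self] at h
  rw [h, integral_pow]
  have hf : ((m+1).factorial : ℝ) = (m+1) * m.factorial := by
    rw [Nat.factorial_succ]; push_cast; ring
  have h1 : ((m:ℝ)+1) ≠ 0 := by positivity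
  have h2 : (m.factorial : ℝ) ≠ 0 := Nat.cast_ne_zero.mpr m.factorial_ne_zero
  rw [hf]
  field_simp
  simp

lemma integral_sq_sub_pow (m : ℕ) (t : ℝ) :
    ∫ x in (0:ℝ)..t, x ^ 2 * ((t - x) ^ m / m.factorial) = 2 * t ^ (m+3) / (m+3).factorial := by
  have hexp : ∀ x : ℝ, x ^ 2 * ((t - x) ^ m / m.factorial) = (x ^ 2 * (t - x) ^ m) / m.factorial :=
    fun x => by ring
  rw [intervalIntegral.integral_congr (fun x _ => hexp x), intervalIntegral.integral_div]
  have h := intervalIntegral.integral_comp_sub_left (a := 0) (b := t)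
    (fun x => x ^ 2 * (t - x) ^ m) t
  simp only [sub_zero, sub_self, sub_sub_cancel] at h
  rw [← h]
  have hexp2 : ∀ x : ℝ, (t - x) ^ 2 * x ^ m
      = t ^ 2 * x ^ m - 2 * t * x ^ (m+1) + x ^ (m+2) := fun x => by ring
  rw [intervalIntegral.integral_congr (fun x _ => hexp2 x)]
  have i1 : IntervalIntegrable (fun x : ℝ => t ^ 2 * x ^ m) volume 0 t :=
    (Continuous.intervalIntegrable (by continuity) 0 t)
  have i2 : IntervalIntegrable (fun x : ℝ => 2 * t * x ^ (m+1)) volume 0 t :=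
    (Continuous.intervalIntegrable (by continuity) 0 t)
  have i3 : IntervalIntegrable (fun x : ℝ => x ^ (m+2)) volume 0 t :=
    (Continuous.intervalIntegrable (by continuity) 0 t)
  rw [intervalIntegral.integral_add (i1.sub i2) i3, intervalIntegral.integral_sub i1 i2,
    intervalIntegral.integral_const_mul, intervalIntegral.integral_const_mul,
    integral_pow, integral_pow, integral_pow]
  have hf : ((m+3).factorial : ℝ) = (m+3) * ((m+2) * ((m+1) * m.factorial)) := by
    rw [Nat.factorial_succ, Nat.factorial_succ, Nat.factorial_succ]; push_cast; ring
  have h1 : ((m:ℝ)+1) ≠ 0 := by positivity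
  have h2 : ((m:ℝ)+2) ≠ 0 := by positivity
  have h3 : ((m:ℝ)+3) ≠ 0 := by positivity
  have h4 : (m.factorial : ℝ) ≠ 0 := Nat.cast_ne_zero.mpr m.factorial_ne_zero
  rw [hf]
  push_cast
  field_simp
  ring

lemma sum_insertNth_zero (n : ℕ) (x : ℝ) (y : Fin n → ℝ) :
    (∑ j, (Fin.insertNth (0 : Fin (n+1)) x y) j) = x + ∑ j, y j := by
  rw [Fin.sum_univ_succAbove _ (0 : Fin (n+1))]
  simp

lemma pi_orthant (n : ℕ) :
    ∀ h : ℝ → ℝ≥0∞, Measurable h →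
    (∫⁻ z, h (∑ j, z j) ∂(Measure.pi fun _ : Fin (n+1) => (volume.restrict (Ici (0:ℝ)))))
      = ∫⁻ t in Ici (0:ℝ), ENNReal.ofReal (t ^ n / n.factorial) * h t := by
  induction n with
  | zero =>
    intro h hh
    have hmes : Measurable fun z : Fin 1 → ℝ => h (∑ j, z j) := by
      exact hh.comp (Finset.measurable_sum _ fun j _ => measurable_pi_apply j)
    rw [pi_succ_decomp 0 0 _ hmes]
    have key : ∀ x : ℝ, (∫⁻ y, h (∑ j, (Fin.insertNth (α := fun _ : Fin 1 => ℝ) 0 x y) j)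
        ∂(Measure.pi fun _ : Fin 0 => (volume.restrict (Ici (0:ℝ))))) = h x := by
      intro x
      have e : ∀ y : Fin 0 → ℝ, (∑ j, (Fin.insertNth (α := fun _ : Fin 1 => ℝ) 0 x y) j) = x := by
        intro y
        rw [sum_insertNth_zero]
        simp
      simp_rw [e]
      rw [Measure.pi_of_empty (fun _ : Fin 0 => (volume.restrict (Ici (0:ℝ))))]
      simp
    rw [lintegral_congr key]
    refine setLIntegral_congr_fun measurableSet_Ici (fun t _ => ?_)
    simp
  | succ m ih =>
    intro h hh
    have hmes : Measurable fun z : Fin (m+2) → ℝ => h (∑ j, z j) := by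
      exact hh.comp (Finset.measurable_sum _ fun j _ => measurable_pi_apply j)
    rw [pi_succ_decomp (m+1) 0 _ hmes]
    have key : ∀ x : ℝ, (∫⁻ y, h (∑ j, (Fin.insertNth (α := fun _ : Fin (m+2) => ℝ) 0 x y) j)
        ∂(Measure.pi fun _ : Fin (m+1) => (volume.restrict (Ici (0:ℝ)))))
        = ∫⁻ t in Ici (0:ℝ), ENNReal.ofReal (t ^ m / m.factorial) * h (x + t) := by
      intro x
      have e : ∀ y : Fin (m+1) → ℝ, (∑ j, (Fin.insertNth (α := fun _ : Fin (m+2) => ℝ) 0 x y) j) = x + ∑ j, y j :=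
        fun y => sum_insertNth_zero _ x y
      simp_rw [e]
      exact ih (fun t => h (x + t)) (hh.comp (measurable_const.add measurable_id))
    rw [lintegral_congr key]
    have conv := conv_lemma (w := fun _ => (1:ℝ)) (v := fun s => s ^ m / m.factorial)
      continuous_const (by continuity) (fun _ _ => zero_le_one)
      (fun s hs => by positivity) hh
    simp only [ENNReal.ofReal_one, one_mul] at conv
    rw [conv]
    refine setLIntegral_congr_fun measurableSet_Ici (fun t _ => ?_)
    rw [integral_sub_pow m t]

lemma exp_meas : Measurable fun t : ℝ => ENNReal.ofReal (Real.exp (-t ^ 2)) := by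
  fun_prop

lemma key_term (n : ℕ) (i : Fin (n+1)) :
    (∫⁻ z, ENNReal.ofReal ((z i) ^ 2) * ENNReal.ofReal (Real.exp (-(∑ j, z j) ^ 2))
      ∂(Measure.pi fun _ : Fin (n+1) => (volume.restrict (Ici (0:ℝ)))))
      = ∫⁻ t in Ici (0:ℝ),
          ENNReal.ofReal (2 * t ^ (n+2) / (n+2).factorial) * ENNReal.ofReal (Real.exp (-t ^ 2)) := by
  have hsum : Measurable fun z : Fin (n+1) → ℝ => ∑ j, z j :=
    Finset.measurable_sum _ fun j _ => measurable_pi_apply j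
  have hFm : Measurable fun z : Fin (n+1) → ℝ =>
      ENNReal.ofReal ((z i) ^ 2) * ENNReal.ofReal (Real.exp (-(∑ j, z j) ^ 2)) := by
    have hzi : Measurable fun z : Fin (n+1) → ℝ => z i := measurable_pi_apply i
    fun_prop
  rw [pi_succ_decomp n i _ hFm]
  have key : ∀ x : ℝ, (∫⁻ y, ENNReal.ofReal (((Fin.insertNth (α := fun _ : Fin (n+1) => ℝ) i x y) i) ^ 2) *
        ENNReal.ofReal (Real.exp (-(∑ j, (Fin.insertNth (α := fun _ : Fin (n+1) => ℝ) i x y) j) ^ 2))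
        ∂(Measure.pi fun _ : Fin n => (volume.restrict (Ici (0:ℝ)))))
      = ENNReal.ofReal (x ^ 2) * ∫⁻ y, ENNReal.ofReal (Real.exp (-(x + ∑ j, y j) ^ 2))
          ∂(Measure.pi fun _ : Fin n => (volume.restrict (Ici (0:ℝ)))) := by
    intro x
    have e : ∀ y : Fin n → ℝ, (∑ j, (Fin.insertNth (α := fun _ : Fin (n+1) => ℝ) i x y) j) = x + ∑ j, y j := by
      intro y
      rw [Fin.sum_univ_succAbove _ i]
      simp
    have e2 : ∀ y : Fin n → ℝ, (Fin.insertNth (α := fun _ : Fin (n+1) => ℝ) i x y) i = x :=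
      fun y => Fin.insertNth_apply_same (α := fun _ : Fin (n+1) => ℝ) i x y
    simp_rw [e, e2]
    have hsm : Measurable fun y : Fin n → ℝ => ∑ j, y j :=
      Finset.measurable_sum _ fun j _ => measurable_pi_apply j
    rw [lintegral_const_mul _ (by fun_prop)]
  rw [lintegral_congr key]
  rcases n with _ | m
  · -- n = 0
    have e0 : ∀ x : ℝ, (∫⁻ y, ENNReal.ofReal (Real.exp (-(x + ∑ j : Fin 0, y j) ^ 2))
        ∂(Measure.pi fun _ : Fin 0 => (volume.restrict (Ici (0:ℝ)))))
        = ENNReal.ofReal (Real.exp (-x ^ 2)) := by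
      intro x
      rw [Measure.pi_of_empty (fun _ : Fin 0 => (volume.restrict (Ici (0:ℝ))))]
      simp
    simp_rw [e0]
    refine setLIntegral_congr_fun measurableSet_Ici (fun t _ => ?_)
    norm_num [Nat.factorial]
  · -- n = m + 1
    have estep : ∀ x : ℝ, (∫⁻ y, ENNReal.ofReal (Real.exp (-(x + ∑ j : Fin (m+1), y j) ^ 2))
        ∂(Measure.pi fun _ : Fin (m+1) => (volume.restrict (Ici (0:ℝ)))))
        = ∫⁻ s in Ici (0:ℝ), ENNReal.ofReal (s ^ m / m.factorial) *
            ENNReal.ofReal (Real.exp (-(x + s) ^ 2)) := by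
      intro x
      exact pi_orthant m (fun t => ENNReal.ofReal (Real.exp (-(x + t) ^ 2))) (by fun_prop)
    simp_rw [estep]
    have conv := conv_lemma (w := fun x => x ^ 2) (v := fun s => s ^ m / m.factorial)
      (by continuity) (by continuity) (fun x _ => sq_nonneg x)
      (fun s hs => by positivity) exp_meas
    rw [conv]
    refine setLIntegral_congr_fun measurableSet_Ici (fun t _ => ?_)
    rw [integral_sq_sub_pow m t]

lemma integral_pow_exp_neg_sq (j : ℕ) :
    ∫ t in Ioi (0:ℝ), t ^ j * Real.exp (-t ^ 2) = Real.Gamma (((j:ℝ)+1)/2) / 2 := by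
  have hs : (0:ℝ) < ((j:ℝ)+1)/2 := by positivity
  have E := integral_comp_rpow_Ioi_of_pos
    (g := fun y => Real.exp (-y) * y ^ (((j:ℝ)+1)/2 - 1)) (p := 2) two_pos
  have congr1 : (∫ x in Ioi (0:ℝ), ((2:ℝ) * x ^ ((2:ℝ) - 1)) •
        (Real.exp (-(x ^ (2:ℝ))) * (x ^ (2:ℝ)) ^ (((j:ℝ)+1)/2 - 1)))
      = ∫ x in Ioi (0:ℝ), 2 * (x ^ j * Real.exp (-x ^ 2)) := by
    refine setIntegral_congr_fun measurableSet_Ioi fun x hx => ?_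
    have hx0 : (0:ℝ) < x := hx
    have h2 : x ^ (2:ℝ) = x ^ 2 := by
      rw [show (2:ℝ) = ((2:ℕ):ℝ) by norm_num, Real.rpow_natCast]
    have h3 : (x ^ (2:ℝ)) ^ (((j:ℝ)+1)/2 - 1) = x ^ ((j:ℝ) - 1) := by
      rw [← Real.rpow_mul hx0.le]
      congr 1
      ring
    have h4 : x ^ ((2:ℝ) - 1) = x := by
      norm_num
    rw [h3, h4, h2, smul_eq_mul]
    have h5 : x * (Real.exp (-x ^ 2) * x ^ ((j:ℝ) - 1)) = x ^ j * Real.exp (-x ^ 2) := by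
      have hxx : x * x ^ ((j:ℝ) - 1) = x ^ j := by
        nth_rewrite 1 [← Real.rpow_one x]
        rw [← Real.rpow_add hx0, show (1:ℝ) + ((j:ℝ) - 1) = ((j:ℕ):ℝ) by norm_num,
          Real.rpow_natCast]
      calc x * (Real.exp (-x ^ 2) * x ^ ((j:ℝ) - 1))
          = (x * x ^ ((j:ℝ) - 1)) * Real.exp (-x ^ 2) := by ring
        _ = x ^ j * Real.exp (-x ^ 2) := by rw [hxx]
    rw [mul_assoc, h5]
  rw [congr1] at E
  rw [integral_const_mul] at E
  rw [Real.Gamma_eq_integral hs, ← E]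
  ring

theorem orthant_integral_sum_squares (d : ℕ) (hd : 1 ≤ d) :
    ∫ y in {y : Fin d → ℝ | ∀ i, 0 ≤ y i},
        (∑ i, (y i) ^ 2) * Real.exp (-(∑ i, y i) ^ 2) =
      (d : ℝ) ^ 2 * Real.Gamma ((d : ℝ) / 2) / (2 * (Nat.factorial (d + 1))) := by
  obtain ⟨n, rfl⟩ : ∃ n, d = n + 1 := ⟨d - 1, (Nat.succ_pred_eq_of_pos hd).symm⟩
  have hsum : Measurable fun z : Fin (n+1) → ℝ => ∑ j, z j :=
    Finset.measurable_sum _ fun j _ => measurable_pi_apply j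
  have hrestrict : (volume : Measure (Fin (n+1) → ℝ)).restrict {y | ∀ i, 0 ≤ y i}
      = Measure.pi fun _ : Fin (n+1) => (volume.restrict (Ici (0:ℝ))) := by
    have hset : {y : Fin (n+1) → ℝ | ∀ i, 0 ≤ y i} = Set.pi Set.univ (fun _ => Ici (0:ℝ)) := by
      ext y; simp [Set.mem_pi, Pi.le_def]
    rw [hset, volume_pi]
    refine (Measure.pi_eq fun s hs => ?_).symm
    rw [Measure.restrict_apply (MeasurableSet.univ_pi hs), ← Set.pi_inter_distrib, Measure.pi_pi]
    exact Finset.prod_congr rfl fun i _ => (Measure.restrict_apply (hs i)).symm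
  have hfm : Measurable fun y : Fin (n+1) → ℝ =>
      (∑ i, (y i) ^ 2) * Real.exp (-(∑ i, y i) ^ 2) := by
    have h1 : Measurable fun y : Fin (n+1) → ℝ => ∑ i, (y i) ^ 2 :=
      Finset.measurable_sum _ fun i _ => (measurable_pi_apply i).pow_const 2
    fun_prop
  rw [integral_eq_lintegral_of_nonneg_ae
    (Filter.Eventually.of_forall fun y => by positivity)
    hfm.aestronglyMeasurable, hrestrict]
  have hsplit : ∀ y : Fin (n+1) → ℝ,
      ENNReal.ofReal ((∑ i, (y i) ^ 2) * Real.exp (-(∑ i, y i) ^ 2))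
      = ∑ i, ENNReal.ofReal ((y i) ^ 2) * ENNReal.ofReal (Real.exp (-(∑ j, y j) ^ 2)) := by
    intro y
    rw [ENNReal.ofReal_mul (by positivity),
      ENNReal.ofReal_sum_of_nonneg (fun i _ => by positivity), Finset.sum_mul]
  rw [lintegral_congr hsplit, lintegral_finset_sum _ (fun i _ => by
    have hzi : Measurable fun z : Fin (n+1) → ℝ => z i := measurable_pi_apply i
    fun_prop)]
  have : ∀ i : Fin (n+1), (∫⁻ z, ENNReal.ofReal ((z i) ^ 2) *
      ENNReal.ofReal (Real.exp (-(∑ j, z j) ^ 2))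
      ∂(Measure.pi fun _ : Fin (n+1) => (volume.restrict (Ici (0:ℝ)))))
      = ∫⁻ t in Ici (0:ℝ), ENNReal.ofReal (2 * t ^ (n+2) / (n+2).factorial) *
          ENNReal.ofReal (Real.exp (-t ^ 2)) := fun i => key_term n i
  rw [Finset.sum_congr rfl fun i _ => this i, Finset.sum_const, Finset.card_univ,
    Fintype.card_fin]
  -- Evaluate the single lintegral
  have hX : (∫⁻ t in Ici (0:ℝ), ENNReal.ofReal (2 * t ^ (n+2) / (n+2).factorial) *
        ENNReal.ofReal (Real.exp (-t ^ 2)))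
      = ENNReal.ofReal (Real.Gamma (((n:ℝ)+3)/2) / (n+2).factorial) := by
    have e1 : (∫⁻ t in Ici (0:ℝ), ENNReal.ofReal (2 * t ^ (n+2) / (n+2).factorial) *
          ENNReal.ofReal (Real.exp (-t ^ 2)))
        = ∫⁻ t in Ioi (0:ℝ), ENNReal.ofReal ((2 / (n+2).factorial) * (t ^ (n+2) * Real.exp (-t ^ 2))) := by
      rw [← Measure.restrict_congr_set Ioi_ae_eq_Ici]
      refine setLIntegral_congr_fun measurableSet_Ioi (fun t ht => ?_)
      have ht' : (0:ℝ) ≤ t := (le_of_lt (Set.mem_Ioi.mp ht))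
      rw [← ENNReal.ofReal_mul (div_nonneg (mul_nonneg (by norm_num) (pow_nonneg ht' _))
        (Nat.cast_nonneg _))]
      congr 1
      ring
    rw [e1, ← ofReal_integral_eq_lintegral_ofReal]
    · rw [integral_const_mul, integral_pow_exp_neg_sq (n+2)]
      congr 1
      have hne : ((n+2).factorial : ℝ) ≠ 0 := Nat.cast_ne_zero.mpr (n+2).factorial_ne_zero
      push_cast
      field_simp
      ring
    · have base : IntegrableOn (fun t : ℝ => t ^ (n+2) * Real.exp (-t ^ 2)) (Ioi 0) := by
        have := integrableOn_rpow_mul_exp_neg_mul_sq (b := 1) one_pos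
          (s := ((n:ℝ)+2)) (by linarith [Nat.cast_nonneg (α := ℝ) n])
        refine (this.congr_fun (fun t ht => ?_) measurableSet_Ioi)
        beta_reduce
        rw [show ((n:ℝ)+2) = (((n+2:ℕ)):ℝ) by push_cast; ring, Real.rpow_natCast]
        norm_num
      exact (base.const_mul _)
    · refine (ae_restrict_iff' measurableSet_Ioi).mpr (Filter.Eventually.of_forall fun t ht => ?_)
      have ht' : (0:ℝ) ≤ t := (le_of_lt (Set.mem_Ioi.mp ht))
      exact mul_nonneg (by positivity) (mul_nonneg (pow_nonneg ht' _) (Real.exp_nonneg _))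
  rw [hX]
  rw [nsmul_eq_mul, ← ENNReal.ofReal_natCast, ← ENNReal.ofReal_mul (by positivity),
    ENNReal.toReal_ofReal (by positivity)]
  -- final arithmetic
  have hgamma : Real.Gamma (((n:ℝ)+3)/2) = (((n:ℝ)+1)/2) * Real.Gamma (((n:ℝ)+1)/2) := by
    have h0 : ((n:ℝ)+1)/2 ≠ 0 := by positivity
    have : (((n:ℝ)+3)/2) = ((n:ℝ)+1)/2 + 1 := by ring
    rw [this, Real.Gamma_add_one h0]
  rw [hgamma]
  have hne : ((n+2).factorial : ℝ) ≠ 0 := Nat.cast_ne_zero.mpr (n+2).factorial_ne_zero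
  push_cast
  field_simp
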